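/- Let μ₁, μ₂, c₁, c₂ ∈ ℝ, and set a = c₁ − μ₁, b = c₂ − μ₂. Then, as ρ → 0, the lower-quadrant probability P(ρ) = ∬_{x<c₁, y<c₂} f_ρ(x,y) dx dy satisfies P(ρ) − [ Φ(a)Φ(b) + φ(a)φ(b)·ρ + (1/2)·φ(a)a·φ(b)b·ρ² + (1/6)·φ(a)(a²−1)·φ(b)(b²−1)·ρ³ ] = O(ρ⁴); that is, the difference is big-O of ρ⁴ in a neighborhood of ρ = 0. -/

import Mathlib

open MeasureTheory Real Set Filter Asymptotics

/-- Standard normal density. -/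
noncomputable def stdPDF (x : ℝ) : ℝ := (Real.sqrt (2 * Real.pi))⁻¹ * Real.exp (-x ^ 2 / 2)

/-- Standard normal CDF. -/
noncomputable def stdCDF (x : ℝ) : ℝ := ∫ u in Set.Iio x, stdPDF u

/-- Bivariate normal density with means `μ₁ μ₂`, unit variances, correlation `ρ`. -/
noncomputable def bvnPDF (μ₁ μ₂ ρ x y : ℝ) : ℝ :=
  (2 * Real.pi * Real.sqrt (1 - ρ ^ 2))⁻¹ *
    Real.exp (-((x - μ₁) ^ 2 - 2 * ρ * (x - μ₁) * (y - μ₂) + (y - μ₂) ^ 2) / (2 * (1 - ρ ^ 2)))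

/-- `Q(ρ)`: probability both coordinates exceed `|z|` in absolute value. -/
noncomputable def quadProb (μ₁ μ₂ z ρ : ℝ) : ℝ :=
  ∫ p in {p : ℝ × ℝ | |z| < |p.1| ∧ |z| < |p.2|}, bvnPDF μ₁ μ₂ ρ p.1 p.2

/-- `Cov(ρ)`: covariance of the two-sided rejection indicators. -/
noncomputable def covInd (μ₁ μ₂ z ρ : ℝ) : ℝ :=
  quadProb μ₁ μ₂ z ρ -
    (stdCDF (z + μ₁) + stdCDF (z - μ₁)) * (stdCDF (z + μ₂) + stdCDF (z - μ₂))




lemma stdPDF_pos (x : ℝ) : 0 < stdPDF x := by unfold stdPDF; positivity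

lemma continuous_stdPDF : Continuous stdPDF := by unfold stdPDF; fun_prop

lemma integrable_stdPDF : Integrable stdPDF := by
  have h := (integrable_exp_neg_mul_sq (by norm_num : (0:ℝ) < 1/2)).const_mul
    (Real.sqrt (2 * Real.pi))⁻¹
  refine h.congr (ae_of_all _ fun x => ?_)
  unfold stdPDF; ring_nf

lemma integrable_mul_stdPDF : Integrable (fun x => x * stdPDF x) := by
  have h := (integrable_mul_exp_neg_mul_sq (by norm_num : (0:ℝ) < 1/2)).const_mul
    (Real.sqrt (2 * Real.pi))⁻¹
  refine h.congr (ae_of_all _ fun x => ?_)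
  unfold stdPDF; ring_nf

lemma integral_stdPDF : ∫ x, stdPDF x = 1 := by
  unfold stdPDF
  rw [integral_const_mul]
  have : ∀ x : ℝ, Real.exp (-x^2/2) = Real.exp (-(1/2) * x ^ 2) := fun x => by ring_nf
  simp_rw [this, integral_gaussian]
  rw [inv_mul_eq_one₀ (by positivity), show Real.pi / (1/2) = 2 * Real.pi by ring]

lemma stdCDF_nonneg (x : ℝ) : 0 ≤ stdCDF x :=
  integral_nonneg fun u => (stdPDF_pos u).le

lemma stdCDF_le_one (x : ℝ) : stdCDF x ≤ 1 := by
  rw [← integral_stdPDF]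
  exact setIntegral_le_integral integrable_stdPDF (ae_of_all _ fun u => (stdPDF_pos u).le)

lemma stdCDF_eq (x : ℝ) : stdCDF x = stdCDF 0 + ∫ t in (0:ℝ)..x, stdPDF t := by
  have h := intervalIntegral.integral_Iic_sub_Iic (a := (0:ℝ)) (b := x) (f := stdPDF)
    (μ := volume) integrable_stdPDF.integrableOn integrable_stdPDF.integrableOn
  unfold stdCDF
  rw [← integral_Iic_eq_integral_Iio, ← integral_Iic_eq_integral_Iio, ← h]
  ring

lemma hasDerivAt_stdCDF (x : ℝ) : HasDerivAt stdCDF (stdPDF x) x := by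
  have h1 : HasDerivAt (fun y => stdCDF 0 + ∫ t in (0:ℝ)..y, stdPDF t) (stdPDF x) x := by
    have := (intervalIntegral.integral_hasDerivAt_right
      (continuous_stdPDF.intervalIntegrable 0 x)
      (continuous_stdPDF.stronglyMeasurableAtFilter _ _)
      continuous_stdPDF.continuousAt)
    exact this.const_add _
  refine h1.congr_of_eventuallyEq (Eventually.of_forall fun y => stdCDF_eq y)

lemma setIntegral_Iio_affine {s m c : ℝ} (hs : 0 < s) (g : ℝ → ℝ) :
    ∫ y in Iio c, g y = ∫ t in Iio ((c - m)/s), s * g (s*t + m) := by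
  have himg : (fun t : ℝ => s*t + m) '' Iio ((c - m)/s) = Iio c := by
    ext y
    simp only [mem_image, mem_Iio]
    constructor
    · rintro ⟨t, ht, rfl⟩
      have h2 := (mul_lt_mul_iff_right₀ hs).2 ht
      rw [mul_div_cancel₀ _ hs.ne'] at h2
      linarith
    · intro hy
      refine ⟨(y - m)/s, by gcongr, by field_simp; ring⟩
  have key := integral_image_eq_integral_abs_deriv_smul (s := Iio ((c - m)/s))
    (f := fun t : ℝ => s*t + m)
    (f' := fun _ => s) measurableSet_Iio
    (fun t _ => by simpa using (((hasDerivAt_id t).const_mul s).add_const m).hasDerivWithinAt)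
    (fun t1 _ t2 _ h => by
      simp only at h
      have : s * t1 = s * t2 := by linarith
      exact mul_left_cancel₀ hs.ne' this) g
  rw [himg] at key
  rw [key]
  simp [abs_of_pos hs, smul_eq_mul]

section
variable {ρ : ℝ} (hρ : |ρ| < 1)

lemma sq_s_pos (hρ : |ρ| < 1) : 0 < 1 - ρ^2 := by
  have := abs_lt.1 hρ
  nlinarith

lemma s_pos (hρ : |ρ| < 1) : 0 < Real.sqrt (1 - ρ^2) := Real.sqrt_pos.2 (sq_s_pos hρ)

lemma s_sq (hρ : |ρ| < 1) : (Real.sqrt (1 - ρ^2))^2 = 1 - ρ^2 := Real.sq_sqrt (sq_s_pos hρ).le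

lemma bvn_factor (hρ : |ρ| < 1) (μ₁ μ₂ x y : ℝ) :
    bvnPDF μ₁ μ₂ ρ x y =
      stdPDF (x - μ₁) * ((Real.sqrt (1 - ρ^2))⁻¹ *
        stdPDF ((y - μ₂ - ρ*(x - μ₁))/Real.sqrt (1 - ρ^2))) := by
  have hs := s_pos hρ
  have hsq := s_sq hρ
  have h2π : Real.sqrt (2*Real.pi) * Real.sqrt (2*Real.pi) = 2*Real.pi :=
    Real.mul_self_sqrt (by positivity)
  unfold bvnPDF stdPDF
  have hconst : (2 * Real.pi * Real.sqrt (1 - ρ ^ 2))⁻¹ =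
      (Real.sqrt (2*Real.pi))⁻¹ * ((Real.sqrt (1 - ρ^2))⁻¹ * (Real.sqrt (2*Real.pi))⁻¹) := by
    conv_lhs => rw [mul_inv, ← h2π, mul_inv]
    ring
  have hexp : -((x - μ₁) ^ 2 - 2 * ρ * (x - μ₁) * (y - μ₂) + (y - μ₂) ^ 2) / (2 * (1 - ρ ^ 2)) =
      -(x - μ₁) ^ 2 / 2 + -((y - μ₂ - ρ*(x - μ₁))/Real.sqrt (1 - ρ^2)) ^ 2 / 2 := by
    rw [div_pow, hsq]
    have h0 : (1 - ρ^2) ≠ 0 := (sq_s_pos hρ).ne'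
    field_simp
    ring
  rw [hconst, hexp, Real.exp_add]
  ring

lemma integrable_bvn (hρ : |ρ| < 1) (μ₁ μ₂ : ℝ) :
    Integrable (fun p : ℝ × ℝ => bvnPDF μ₁ μ₂ ρ p.1 p.2) := by
  have hs := s_pos hρ
  have habs := abs_lt.1 hρ
  -- dominating function
  have hint : Integrable (fun p : ℝ × ℝ =>
      ((2 * Real.pi * Real.sqrt (1 - ρ^2))⁻¹ * Real.exp (-(1/4) * (p.1 - μ₁)^2)) *
        Real.exp (-(1/4) * (p.2 - μ₂)^2)) := by
    have h1 : Integrable (fun x : ℝ => (2 * Real.pi * Real.sqrt (1 - ρ^2))⁻¹ *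
        Real.exp (-(1/4) * (x - μ₁)^2)) := by
      have := ((integrable_exp_neg_mul_sq (by norm_num : (0:ℝ) < 1/4)).comp_sub_right μ₁)
      exact this.const_mul _
    have h2 : Integrable (fun y : ℝ => Real.exp (-(1/4) * (y - μ₂)^2)) :=
      (integrable_exp_neg_mul_sq (by norm_num : (0:ℝ) < 1/4)).comp_sub_right μ₂
    rw [Measure.volume_eq_prod]
    exact h1.mul_prod h2
  refine hint.mono' ?_ (ae_of_all _ fun p => ?_)
  · apply Continuous.aestronglyMeasurable
    unfold bvnPDF
    fun_prop
  · rw [Real.norm_eq_abs]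
    unfold bvnPDF
    rw [abs_of_nonneg (by positivity)]
    set u := p.1 - μ₁ with hu
    set v := p.2 - μ₂ with hv
    have key : u^2 - 2*ρ*u*v + v^2 ≥ (1 - |ρ|) * (u^2 + v^2) := by
      have h1 : 2*ρ*u*v ≤ |ρ| * (u^2 + v^2) := by
        have := abs_mul_abs_self ρ
        nlinarith [abs_nonneg ρ, sq_nonneg (u - v), sq_nonneg (u + v), neg_abs_le ρ, le_abs_self ρ,
          sq_nonneg (abs ρ*u - v), sq_nonneg (abs ρ*u + v), abs_mul ρ u]
      nlinarith
    have hq : (u^2 - 2*ρ*u*v + v^2) / (2 * (1 - ρ^2)) ≥ (u^2 + v^2)/4 := by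
      rw [ge_iff_le, div_le_div_iff₀ (by norm_num) (by nlinarith)]
      have h4 : 2 * (1 - ρ^2) ≤ 2 * (1 - |ρ|) * 2 := by nlinarith [abs_nonneg ρ, abs_mul_abs_self ρ]
      calc (u^2 + v^2) * (2 * (1 - ρ^2)) ≤ (u^2+v^2) * (2 * (1-|ρ|) * 2) := by
              apply mul_le_mul_of_nonneg_left h4 (by positivity)
        _ ≤ (u^2 - 2*ρ*u*v + v^2) * 4 := by nlinarith
    have hQ : -(u ^ 2 - 2 * ρ * u * v + v ^ 2) / (2 * (1 - ρ ^ 2)) ≤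
        -(1/4) * u^2 + -(1/4) * v^2 := by
      have := neg_le_neg hq
      calc -(u ^ 2 - 2 * ρ * u * v + v ^ 2) / (2 * (1 - ρ ^ 2))
          = -((u ^ 2 - 2 * ρ * u * v + v ^ 2) / (2 * (1 - ρ ^ 2))) := by ring
        _ ≤ -((u^2 + v^2)/4) := this
        _ = -(1/4) * u^2 + -(1/4) * v^2 := by ring
    calc (2 * Real.pi * Real.sqrt (1 - ρ ^ 2))⁻¹ *
          Real.exp (-(u ^ 2 - 2 * ρ * u * v + v ^ 2) / (2 * (1 - ρ ^ 2)))
        ≤ (2 * Real.pi * Real.sqrt (1 - ρ ^ 2))⁻¹ *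
          Real.exp (-(1/4) * u^2 + -(1/4) * v^2) := by
          apply mul_le_mul_of_nonneg_left (Real.exp_le_exp.2 hQ) (by positivity)
      _ = (2 * Real.pi * Real.sqrt (1 - ρ ^ 2))⁻¹ *
          Real.exp (-(1/4) * u^2) * Real.exp (-(1/4) * v^2) := by
          rw [Real.exp_add]; ring

end

lemma quadInt_eq {ρ : ℝ} (hρ : |ρ| < 1) (μ₁ μ₂ c₁ c₂ : ℝ) :
    (∫ p in {p : ℝ × ℝ | p.1 < c₁ ∧ p.2 < c₂}, bvnPDF μ₁ μ₂ ρ p.1 p.2)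
      = ∫ u in Iio (c₁ - μ₁),
          stdPDF u * stdCDF ((c₂ - μ₂ - ρ*u)/Real.sqrt (1-ρ^2)) := by
  have hs := s_pos hρ
  have hset : {p : ℝ × ℝ | p.1 < c₁ ∧ p.2 < c₂} = Iio c₁ ×ˢ Iio c₂ := by
    ext p; simp [Set.mem_prod]
  rw [hset]
  rw [show (volume : Measure (ℝ × ℝ)) = (volume : Measure ℝ).prod volume from rfl]
  rw [setIntegral_prod _ (by
    rw [show ((volume : Measure ℝ).prod volume) = (volume : Measure (ℝ × ℝ)) from rfl]
    exact (integrable_bvn hρ μ₁ μ₂).integrableOn)]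
  have hinner : ∀ x : ℝ, (∫ y in Iio c₂, bvnPDF μ₁ μ₂ ρ x y)
      = stdPDF (x - μ₁) * stdCDF ((c₂ - μ₂ - ρ*(x - μ₁))/Real.sqrt (1-ρ^2)) := by
    intro x
    simp_rw [bvn_factor hρ μ₁ μ₂ x]
    rw [integral_const_mul]
    congr 1
    rw [setIntegral_Iio_affine (m := μ₂ + ρ*(x - μ₁)) hs]
    have : ∀ t : ℝ, Real.sqrt (1-ρ^2) *
        ((Real.sqrt (1-ρ^2))⁻¹ * stdPDF ((Real.sqrt (1-ρ^2)*t + (μ₂ + ρ*(x - μ₁)) - μ₂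
          - ρ*(x - μ₁))/Real.sqrt (1-ρ^2))) = stdPDF t := by
      intro t
      rw [show Real.sqrt (1-ρ^2)*t + (μ₂ + ρ*(x - μ₁)) - μ₂ - ρ*(x - μ₁)
          = Real.sqrt (1-ρ^2)*t by ring, mul_div_cancel_left₀ _ hs.ne']
      field_simp
    simp_rw [this]
    rw [show c₂ - (μ₂ + ρ*(x - μ₁)) = c₂ - μ₂ - ρ*(x - μ₁) by ring]
    rfl
  simp_rw [hinner]
  rw [setIntegral_Iio_affine (s := (1:ℝ)) (m := μ₁) one_pos]
  simp

lemma hasDerivAt_stdPDF (x : ℝ) : HasDerivAt stdPDF (-x * stdPDF x) x := by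
  have h : HasDerivAt (fun x : ℝ => -x^2/2) (-x) x := by
    have := ((hasDerivAt_pow 2 x).neg).div_const 2
    simpa using this.congr_deriv (by push_cast; ring)
  have := (h.exp).const_mul (Real.sqrt (2 * Real.pi))⁻¹
  unfold stdPDF
  convert this using 1
  · rfl
  · rfl
  ring

noncomputable def gg (b ρ u : ℝ) : ℝ := (b - ρ*u)/Real.sqrt (1-ρ^2)

noncomputable def DD (b ρ u : ℝ) : ℝ := stdPDF (gg b ρ u) * ((ρ*b - u)/(Real.sqrt (1-ρ^2))^3)

lemma hasDerivAt_gg {ρ : ℝ} (hρ : |ρ| < 1) (b u : ℝ) :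
    HasDerivAt (fun r => gg b r u) ((ρ*b - u)/(Real.sqrt (1-ρ^2))^3) ρ := by
  have h2 := sq_s_pos hρ
  have hs := s_pos hρ
  have hsq := s_sq hρ
  have hS : HasDerivAt (fun r : ℝ => Real.sqrt (1 - r^2)) (-ρ/Real.sqrt (1-ρ^2)) ρ := by
    have hin : HasDerivAt (fun r : ℝ => 1 - r^2) (-(2*ρ)) ρ := by
      simpa using ((hasDerivAt_pow 2 ρ).const_sub 1).congr_deriv (by push_cast; ring)
    have := (Real.hasDerivAt_sqrt h2.ne').comp ρ hin
    convert this using 1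
    · rfl
    · rfl
    · rfl
    field_simp
  have hN : HasDerivAt (fun r : ℝ => b - r*u) (-u) ρ := by
    simpa using ((hasDerivAt_id ρ).mul_const u).const_sub b
  have := hN.div hS hs.ne'
  unfold gg
  convert this using 1
  · rfl
  · rfl
  · rfl
  rw [div_eq_div_iff (by positivity) (by positivity)]
  field_simp
  linear_combination u * hsq

lemma stdPDF_le (x : ℝ) : stdPDF x ≤ (Real.sqrt (2*Real.pi))⁻¹ := by
  unfold stdPDF
  have h1 : Real.exp (-x^2/2) ≤ 1 := Real.exp_le_one_iff.2 (by nlinarith [sq_nonneg x])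
  calc (Real.sqrt (2*Real.pi))⁻¹ * Real.exp (-x^2/2) ≤ (Real.sqrt (2*Real.pi))⁻¹ * 1 := by
        gcongr
    _ = (Real.sqrt (2*Real.pi))⁻¹ := mul_one _

lemma continuous_stdCDF : Continuous stdCDF :=
  continuous_iff_continuousAt.2 fun x => (hasDerivAt_stdCDF x).continuousAt

attribute [fun_prop] continuous_stdPDF continuous_stdCDF

lemma tendsto_stdPDF_atBot : Tendsto stdPDF atBot (nhds 0) := by
  have h1 : Tendsto (fun x : ℝ => -x^2/2) atBot atBot := by
    apply tendsto_atBot_mono' atBot ?_ tendsto_id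
    filter_upwards [eventually_le_atBot (-2:ℝ)] with x hx
    show -x^2/2 ≤ x
    nlinarith
  have := (Real.tendsto_exp_atBot).comp h1
  have h2 := this.const_mul (Real.sqrt (2*Real.pi))⁻¹
  rw [mul_zero] at h2
  refine h2.congr fun x => ?_
  simp only [Function.comp]
  rfl

lemma hasDerivAt_H {ρ : ℝ} (hρ : |ρ| < 1) (b u : ℝ) :
    HasDerivAt (fun v => (Real.sqrt (1-ρ^2))⁻¹ * (stdPDF v * stdPDF (gg b ρ v)))
      (stdPDF u * DD b ρ u) u := by
  have hs := s_pos hρ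
  have hsq := s_sq hρ
  have hgu : HasDerivAt (fun v => gg b ρ v) (-ρ/Real.sqrt (1-ρ^2)) u := by
    unfold gg
    have : HasDerivAt (fun v : ℝ => b - ρ*v) (-ρ) u := by
      simpa using ((hasDerivAt_id u).const_mul ρ).const_sub b
    simpa [div_eq_mul_inv] using this.div_const (Real.sqrt (1-ρ^2))
  have hcomp := (hasDerivAt_stdPDF (gg b ρ u)).comp u hgu
  have hprod := (hasDerivAt_stdPDF u).mul hcomp
  have := hprod.const_mul (Real.sqrt (1-ρ^2))⁻¹
  have hscalar : (ρ*b - u)/(Real.sqrt (1-ρ^2))^3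
      = (Real.sqrt (1-ρ^2))⁻¹ * (-u + (gg b ρ u)*(ρ/Real.sqrt (1-ρ^2))) := by
    unfold gg
    field_simp
    linear_combination u * hsq
  convert this using 1
  · rfl
  · rfl
  · rfl
  simp only [Function.comp]
  unfold DD
  linear_combination (stdPDF u * stdPDF (gg b ρ u)) * hscalar

lemma integrable_DD {ρ : ℝ} (hρ : |ρ| < 1) (b : ℝ) :
    Integrable (fun u => stdPDF u * DD b ρ u) := by
  have hs := s_pos hρ
  have hbound : Integrable (fun u : ℝ =>
      (Real.sqrt (2*Real.pi))⁻¹/(Real.sqrt (1-ρ^2))^3 *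
        ((|ρ*b|) * stdPDF u + |u * stdPDF u|)) :=
    ((integrable_stdPDF.const_mul _).add integrable_mul_stdPDF.abs).const_mul _
  refine hbound.mono' ?_ (ae_of_all _ fun u => ?_)
  · apply Continuous.aestronglyMeasurable
    unfold DD gg
    fun_prop
  · have hφ := stdPDF_pos u
    have hφg := stdPDF_pos (gg b ρ u)
    have hle := stdPDF_le (gg b ρ u)
    rw [Real.norm_eq_abs]
    unfold DD
    rw [abs_mul, abs_mul, abs_of_nonneg hφ.le, abs_of_nonneg hφg.le, abs_div,
      abs_of_nonneg (by positivity : (0:ℝ) ≤ (Real.sqrt (1-ρ^2))^3)]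
    have h1 : |ρ*b - u| ≤ |ρ*b| + |u| := abs_sub _ _
    calc stdPDF u * (stdPDF (gg b ρ u) * (|ρ*b - u| / Real.sqrt (1-ρ^2)^3))
        ≤ stdPDF u * ((Real.sqrt (2*Real.pi))⁻¹ * ((|ρ*b| + |u|) / Real.sqrt (1-ρ^2)^3)) := by
          gcongr
      _ = (Real.sqrt (2*Real.pi))⁻¹/(Real.sqrt (1-ρ^2))^3 *
          ((|ρ*b|) * stdPDF u + |u| * stdPDF u) := by ring
      _ = (Real.sqrt (2*Real.pi))⁻¹/(Real.sqrt (1-ρ^2))^3 *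
          ((|ρ*b|) * stdPDF u + |u * stdPDF u|) := by
          rw [abs_mul u (stdPDF u), abs_of_nonneg hφ.le]

lemma integral_DD {ρ : ℝ} (hρ : |ρ| < 1) (a b : ℝ) :
    ∫ u in Iio a, stdPDF u * DD b ρ u
      = (Real.sqrt (1-ρ^2))⁻¹ * (stdPDF a * stdPDF (gg b ρ a)) := by
  have hs := s_pos hρ
  rw [← integral_Iic_eq_integral_Iio]
  have key := integral_Iic_of_hasDerivAt_of_tendsto
    (f := fun v => (Real.sqrt (1-ρ^2))⁻¹ * (stdPDF v * stdPDF (gg b ρ v)))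
    (f' := fun u => stdPDF u * DD b ρ u) (a := a) (m := 0)
    ?_ (fun u _ => hasDerivAt_H hρ b u) (integrable_DD hρ b).integrableOn ?_
  · rw [key, sub_zero]
  · apply Continuous.continuousWithinAt
    unfold gg
    fun_prop
  · have hb : ∀ v : ℝ, ‖(Real.sqrt (1-ρ^2))⁻¹ * (stdPDF v * stdPDF (gg b ρ v))‖
        ≤ (Real.sqrt (1-ρ^2))⁻¹ * (Real.sqrt (2*Real.pi))⁻¹ * stdPDF v := by
      intro v
      rw [Real.norm_eq_abs, abs_of_nonneg (mul_nonneg (by positivity)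
        (mul_nonneg (stdPDF_pos v).le (stdPDF_pos _).le))]
      calc (Real.sqrt (1-ρ^2))⁻¹ * (stdPDF v * stdPDF (gg b ρ v))
          ≤ (Real.sqrt (1-ρ^2))⁻¹ * (stdPDF v * (Real.sqrt (2*Real.pi))⁻¹) := by
            gcongr
            · exact (stdPDF_pos v).le
            · exact stdPDF_le _
        _ = (Real.sqrt (1-ρ^2))⁻¹ * (Real.sqrt (2*Real.pi))⁻¹ * stdPDF v := by ring
    have h0 : Tendsto (fun v : ℝ => (Real.sqrt (1-ρ^2))⁻¹ * (Real.sqrt (2*Real.pi))⁻¹ * stdPDF v)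
        atBot (nhds 0) := by
      simpa using tendsto_stdPDF_atBot.const_mul ((Real.sqrt (1-ρ^2))⁻¹ * (Real.sqrt (2*Real.pi))⁻¹)
    refine squeeze_zero_norm (fun v => hb v) h0

lemma hasDerivAt_F {ρ₀ : ℝ} (hρ₀ : |ρ₀| < 1) (a b : ℝ) :
    HasDerivAt (fun r => ∫ u in Iio a, stdPDF u * stdCDF (gg b r u))
      ((Real.sqrt (1-ρ₀^2))⁻¹ * (stdPDF a * stdPDF (gg b ρ₀ a))) ρ₀ := by
  set κ := (1 + |ρ₀|)/2 with hκdef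
  have hκ1 : κ < 1 := by simp only [hκdef]; linarith
  have hκ0 : 0 < κ := by positivity
  have hρκ : |ρ₀| < κ := by simp only [hκdef]; linarith
  set ε := (1 - |ρ₀|)/2 with hεdef
  have hε : 0 < ε := by simp only [hεdef]; linarith [abs_lt.1 hρ₀]
  have hballκ : ∀ r ∈ Metric.ball ρ₀ ε, |r| < κ := by
    intro r hr
    rw [Metric.mem_ball, Real.dist_eq] at hr
    have := abs_sub_abs_le_abs_sub r ρ₀
    simp only [hκdef, hεdef] at *
    linarith
  set σ := Real.sqrt (1 - κ^2) with hσdef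
  have hσ : 0 < σ := Real.sqrt_pos.2 (by nlinarith)
  have hσle : ∀ r : ℝ, |r| < κ → σ ≤ Real.sqrt (1 - r^2) := by
    intro r hr
    apply Real.sqrt_le_sqrt
    nlinarith [abs_nonneg r, sq_abs r, abs_nonneg ρ₀]
  set bound : ℝ → ℝ := fun u =>
    (Real.sqrt (2*Real.pi))⁻¹/σ^3 * ((1 + |b|) * (stdPDF u + |u * stdPDF u|)) with hbdef
  have key := hasDerivAt_integral_of_dominated_loc_of_deriv_le (μ := volume.restrict (Iio a))
    (F := fun r u => stdPDF u * stdCDF (gg b r u))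
    (F' := fun r u => stdPDF u * DD b r u) (bound := bound) (x₀ := ρ₀) (Metric.ball_mem_nhds ρ₀ hε)
    ?_ ?_ ?_ ?_ ?_ ?_
  · have := key.2
    rwa [integral_DD hρ₀ a b] at this
  · filter_upwards with r
    apply Continuous.aestronglyMeasurable
    unfold gg
    fun_prop
  · refine (integrable_stdPDF.restrict.mono' ?_ (ae_of_all _ fun u => ?_))
    · apply Continuous.aestronglyMeasurable
      unfold gg
      fun_prop
    · rw [Real.norm_eq_abs, abs_of_nonneg (mul_nonneg (stdPDF_pos u).le (stdCDF_nonneg _))]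
      calc stdPDF u * stdCDF (gg b ρ₀ u) ≤ stdPDF u * 1 :=
            mul_le_mul_of_nonneg_left (stdCDF_le_one _) (stdPDF_pos u).le
        _ = stdPDF u := mul_one _
  · apply Continuous.aestronglyMeasurable
    unfold DD gg
    fun_prop
  · filter_upwards with u
    intro r hr
    have hrκ := hballκ r hr
    have hr1 : |r| < 1 := hrκ.trans hκ1
    have hsr := s_pos hr1
    have hσr := hσle r hrκ
    rw [Real.norm_eq_abs]
    unfold DD
    rw [abs_mul, abs_mul, abs_of_nonneg (stdPDF_pos u).le,
      abs_of_nonneg (stdPDF_pos (gg b r u)).le, abs_div,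
      abs_of_nonneg (by positivity : (0:ℝ) ≤ (Real.sqrt (1-r^2))^3)]
    have h1 : |r*b - u| ≤ (1 + |b|) * (1 + |u|) := by
      have : |r*b - u| ≤ |r*b| + |u| := abs_sub _ _
      have h2 : |r*b| ≤ |b| := by
        rw [abs_mul]
        calc |r| * |b| ≤ 1 * |b| := by
              apply mul_le_mul_of_nonneg_right (hr1.le) (abs_nonneg b)
          _ = |b| := one_mul _
      nlinarith [abs_nonneg u, abs_nonneg b]
    calc stdPDF u * (stdPDF (gg b r u) * (|r*b - u| / Real.sqrt (1-r^2)^3))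
        ≤ stdPDF u * ((Real.sqrt (2*Real.pi))⁻¹ * ((1 + |b|) * (1 + |u|) / σ^3)) := by
          gcongr
          · exact (stdPDF_pos u).le
          · exact stdPDF_le _
      _ = (Real.sqrt (2*Real.pi))⁻¹/σ^3 * ((1 + |b|) * (stdPDF u + |u| * stdPDF u)) := by
          ring
      _ = bound u := by
          simp only [hbdef, abs_mul u (stdPDF u), abs_of_nonneg (stdPDF_pos u).le]
  · rw [hbdef]
    exact (((integrable_stdPDF.add integrable_mul_stdPDF.abs).const_mul _).const_mul _).restrict
  · filter_upwards with u
    intro r hr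
    have hr1 : |r| < 1 := (hballκ r hr).trans hκ1
    have hd := ((hasDerivAt_stdCDF (gg b r u)).comp r (hasDerivAt_gg hr1 b u)).const_mul (stdPDF u)
    convert hd using 1
    · rfl
    · rfl
    · rfl

lemma isBigO_deriv_step {f f' : ℝ → ℝ} {n : ℕ} (h0 : f 0 = 0)
    (hd : ∀ x ∈ Ioo (-1:ℝ) 1, HasDerivAt f (f' x) x)
    (hO : f' =O[nhds (0:ℝ)] fun x => x^n) :
    f =O[nhds (0:ℝ)] fun x => x^(n+1) := by
  obtain ⟨C, hC⟩ := hO.isBigOWith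
  rw [IsBigOWith, Metric.eventually_nhds_iff] at hC
  obtain ⟨ε, hε, hb⟩ := hC
  set δ := min ε 1 with hδ
  have hδ0 : 0 < δ := lt_min hε one_pos
  rw [isBigO_iff]
  refine ⟨|C|, Metric.eventually_nhds_iff.2 ⟨δ, hδ0, fun {x} hx => ?_⟩⟩
  rw [Real.dist_eq, sub_zero] at hx
  have hx1 : |x| < 1 := lt_of_lt_of_le hx (min_le_right _ _)
  have hxε : |x| < ε := lt_of_lt_of_le hx (min_le_left _ _)
  have hsub : Icc (-|x|) |x| ⊆ Ioo (-1:ℝ) 1 := fun t ht => by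
    constructor <;> [linarith [ht.1]; linarith [ht.2]]
  have hmvt := Convex.norm_image_sub_le_of_norm_hasDerivWithin_le
    (f := f) (f' := f') (C := |C| * |x|^n) (s := Icc (-|x|) |x|)
    (fun t ht => (hd t (hsub ht)).hasDerivWithinAt)
    (fun t ht => by
      have htx : |t| ≤ |x| := abs_le.2 ⟨ht.1, ht.2⟩
      have htε : dist t 0 < ε := by
        rw [Real.dist_eq, sub_zero]; exact lt_of_le_of_lt htx hxε
      calc ‖f' t‖ ≤ C * ‖t^n‖ := hb htε
        _ ≤ |C| * ‖t^n‖ := by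
            apply mul_le_mul_of_nonneg_right (le_abs_self C) (norm_nonneg _)
        _ = |C| * |t|^n := by rw [Real.norm_eq_abs, abs_pow]
        _ ≤ |C| * |x|^n := by
            apply mul_le_mul_of_nonneg_left (pow_le_pow_left₀ (abs_nonneg t) htx n) (abs_nonneg C))
    (convex_Icc _ _)
    (⟨by linarith [abs_nonneg x], abs_nonneg x⟩ : (0:ℝ) ∈ Icc (-|x|) |x|)
    (⟨neg_abs_le x, le_abs_self x⟩ : x ∈ Icc (-|x|) |x|)
  rw [h0, sub_zero] at hmvt
  calc ‖f x‖ ≤ |C| * |x|^n * ‖x - 0‖ := hmvt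
    _ = |C| * ‖x^(n+1)‖ := by
        rw [sub_zero, Real.norm_eq_abs, Real.norm_eq_abs, abs_pow, pow_succ]
        ring

noncomputable def qq (ρ : ℝ) : ℝ := 1 - ρ^2
noncomputable def NN (a b ρ : ℝ) : ℝ := a^2 + b^2 - 2*ρ*a*b
noncomputable def EE (a b ρ : ℝ) : ℝ := -(NN a b ρ)/(2*qq ρ)
noncomputable def RR (a b ρ : ℝ) : ℝ := ρ/qq ρ + (a*b*qq ρ - ρ*NN a b ρ)/(qq ρ)^2
noncomputable def RRd (a b ρ : ℝ) : ℝ :=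
  (qq ρ + 2*ρ^2)/(qq ρ)^2 +
    (-(NN a b ρ)*qq ρ + 4*ρ*a*b*qq ρ - 4*ρ^2*(NN a b ρ))/(qq ρ)^3
noncomputable def Psi (a b ρ : ℝ) : ℝ :=
  ((Real.sqrt (2*Real.pi))⁻¹)^2 * (Real.sqrt (qq ρ))⁻¹ * Real.exp (EE a b ρ)

lemma qq_pos {ρ : ℝ} (hρ : |ρ| < 1) : 0 < qq ρ := sq_s_pos hρ

lemma hasDerivAt_qq (ρ : ℝ) : HasDerivAt qq (-2*ρ) ρ := by
  unfold qq
  simpa using ((hasDerivAt_pow 2 ρ).const_sub 1).congr_deriv (by push_cast; ring)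

lemma hasDerivAt_NN (a b ρ : ℝ) : HasDerivAt (NN a b) (-2*a*b) ρ := by
  have h2 : HasDerivAt (fun x : ℝ => a^2+b^2 - 2*a*b*x) (-(2*a*b*1)) ρ :=
    ((hasDerivAt_id ρ).const_mul (2*a*b)).const_sub _
  have hfun : (NN a b) = fun x : ℝ => a^2+b^2-2*a*b*x := by
    funext x; unfold NN; ring
  rw [hfun]
  convert h2 using 1
  ring

lemma hasDerivAt_EE (a b : ℝ) {ρ : ℝ} (hρ : |ρ| < 1) :
    HasDerivAt (EE a b) ((a*b*qq ρ - ρ*(NN a b ρ))/(qq ρ)^2) ρ := by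
  have hq := qq_pos hρ
  have hnum : HasDerivAt (fun r => -(NN a b r)) (2*a*b) ρ := by
    exact (hasDerivAt_NN a b ρ).neg.congr_deriv (by ring)
  have hden : HasDerivAt (fun r => 2*qq r) (-4*ρ) ρ := by
    simpa using ((hasDerivAt_qq ρ).const_mul 2).congr_deriv (by ring)
  have := hnum.div hden (by positivity)
  unfold EE
  convert this using 1
  · rfl
  · rfl
  · rfl
  field_simp
  ring

lemma hasDerivAt_sqrt_qq {ρ : ℝ} (hρ : |ρ| < 1) :
    HasDerivAt (fun r => Real.sqrt (qq r)) (-ρ/Real.sqrt (qq ρ)) ρ := by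
  have hq := qq_pos hρ
  have := (Real.hasDerivAt_sqrt hq.ne').comp ρ (hasDerivAt_qq ρ)
  convert this using 1
  · rfl
  · rfl
  · rfl
  field_simp

lemma hasDerivAt_Psi (a b : ℝ) {ρ : ℝ} (hρ : |ρ| < 1) :
    HasDerivAt (Psi a b) (Psi a b ρ * RR a b ρ) ρ := by
  have hq := qq_pos hρ
  have hs : 0 < Real.sqrt (qq ρ) := Real.sqrt_pos.2 hq
  have hsq : (Real.sqrt (qq ρ))^2 = qq ρ := Real.sq_sqrt hq.le
  have hinv : HasDerivAt (fun r => (Real.sqrt (qq r))⁻¹)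
      (ρ/(qq ρ * Real.sqrt (qq ρ))) ρ := by
    have := (hasDerivAt_sqrt_qq hρ).inv hs.ne'
    convert this using 1
    · rfl
    · rfl
    · rfl
    rw [div_eq_div_iff (by positivity) (by positivity)]
    field_simp
    linear_combination ρ * hsq
  have hexp := (hasDerivAt_EE a b hρ).exp
  have := (hinv.mul hexp).const_mul (((Real.sqrt (2*Real.pi))⁻¹)^2)
  have hfun : Psi a b = fun y => (((Real.sqrt (2*Real.pi))⁻¹)^2) *
      ((Real.sqrt (qq y))⁻¹ * Real.exp (EE a b y)) := by
    funext y; unfold Psi; ring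
  rw [hfun]
  convert this using 1
  · rfl
  · rfl
  · rfl
  unfold RR
  field_simp

lemma hasDerivAt_RR (a b : ℝ) {ρ : ℝ} (hρ : |ρ| < 1) :
    HasDerivAt (RR a b) (RRd a b ρ) ρ := by
  have hq := qq_pos hρ
  have h1 : HasDerivAt (fun r => r/qq r) ((qq ρ + 2*ρ^2)/(qq ρ)^2) ρ := by
    have := (hasDerivAt_id ρ).div (hasDerivAt_qq ρ) hq.ne'
    convert this using 1
    · rfl
    · rfl
    · rfl
    simp only [id_eq]
    field_simp
    ring
  have hnum : HasDerivAt (fun r => a*b*qq r - r*(NN a b r))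
      (-2*ρ*a*b - NN a b ρ + 2*ρ*a*b) ρ := by
    have hn1 := (hasDerivAt_qq ρ).const_mul (a*b)
    have hn2 := (hasDerivAt_id ρ).mul (hasDerivAt_NN a b ρ)
    have := hn1.sub hn2
    convert this using 1
    · rfl
    · rfl
    · rfl
    simp only [id_eq]
    ring
  have hden : HasDerivAt (fun r => (qq r)^2) (2*qq ρ*(-2*ρ)) ρ := by
    have := (hasDerivAt_qq ρ).pow 2
    convert this using 1
    · rfl
    · rfl
    · rfl
    push_cast
    ring
  have h2 := hnum.div hden (by positivity)
  have := h1.add h2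
  unfold RR RRd
  convert this using 1
  · rfl
  · rfl
  · rfl
  rw [div_add_div _ _ (by positivity) (by positivity),
    div_add_div _ _ (by positivity) (by positivity)]
  rw [div_eq_div_iff (by positivity) (by positivity)]
  unfold NN qq
  ring

lemma qq_zero : qq 0 = 1 := by unfold qq; norm_num

lemma Psi_zero (a b : ℝ) : Psi a b 0 = stdPDF a * stdPDF b := by
  unfold Psi EE NN qq stdPDF
  norm_num
  rw [show ((-b^2 + -a^2)/2 : ℝ) = -a^2/2 + -b^2/2 by ring, Real.exp_add]
  ring

lemma RR_zero (a b : ℝ) : RR a b 0 = a*b := by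
  unfold RR NN qq; norm_num

lemma RRd_zero (a b : ℝ) : RRd a b 0 = 1 - a^2 - b^2 := by
  unfold RRd NN qq; norm_num; ring

lemma corner_eq (a b : ℝ) {ρ : ℝ} (hρ : |ρ| < 1) :
    (Real.sqrt (1-ρ^2))⁻¹ * (stdPDF a * stdPDF (gg b ρ a)) = Psi a b ρ := by
  have hq : qq ρ = 1 - ρ^2 := rfl
  have hs := s_pos hρ
  have hsq := s_sq hρ
  have hexp : -a^2/2 + -((b - ρ*a)/Real.sqrt (1-ρ^2))^2/2
      = -(a^2 + b^2 - 2*ρ*a*b)/(2*(1-ρ^2)) := by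
    rw [div_pow, hsq]
    have h0 : (1 - ρ^2) ≠ 0 := (sq_s_pos hρ).ne'
    field_simp
    ring
  unfold Psi EE NN gg stdPDF
  rw [hq, ← hexp, Real.exp_add]
  ring

lemma differentiableAt_psi2 (a b : ℝ) :
    DifferentiableAt ℝ (fun ρ => Psi a b ρ * ((RR a b ρ)^2 + RRd a b ρ)) 0 := by
  have h1 : |(0:ℝ)| < 1 := by norm_num
  have hΨ := (hasDerivAt_Psi a b h1).differentiableAt
  have hR := (hasDerivAt_RR a b h1).differentiableAt
  have hq0 : qq 0 ≠ 0 := by rw [qq_zero]; norm_num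
  have hRd : DifferentiableAt ℝ (RRd a b) 0 := by
    apply DifferentiableAt.add
    · apply DifferentiableAt.div
      · unfold qq; fun_prop
      · unfold qq; fun_prop
      · positivity
    · apply DifferentiableAt.div
      · unfold NN qq; fun_prop
      · unfold qq; fun_prop
      · positivity
  exact hΨ.mul ((hR.pow 2).add hRd)

lemma F_zero (a b : ℝ) :
    (∫ u in Iio a, stdPDF u * stdCDF (gg b 0 u)) = stdCDF a * stdCDF b := by
  have hg : ∀ u : ℝ, gg b 0 u = b := by
    intro u; unfold gg; norm_num
  simp_rw [hg]
  rw [integral_mul_const]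
  rfl


theorem statement9 (μ₁ μ₂ c₁ c₂ : ℝ) :
    (fun ρ : ℝ =>
        (∫ p in {p : ℝ × ℝ | p.1 < c₁ ∧ p.2 < c₂}, bvnPDF μ₁ μ₂ ρ p.1 p.2) -
          (stdCDF (c₁ - μ₁) * stdCDF (c₂ - μ₂)
            + stdPDF (c₁ - μ₁) * stdPDF (c₂ - μ₂) * ρ
            + 1 / 2 * (stdPDF (c₁ - μ₁) * (c₁ - μ₁)) * (stdPDF (c₂ - μ₂) * (c₂ - μ₂)) * ρ ^ 2
            + 1 / 6 * (stdPDF (c₁ - μ₁) * ((c₁ - μ₁) ^ 2 - 1))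
                * (stdPDF (c₂ - μ₂) * ((c₂ - μ₂) ^ 2 - 1)) * ρ ^ 3))
      =O[nhds (0 : ℝ)] fun ρ => ρ ^ 4 := by
  set a := c₁ - μ₁ with ha
  set b := c₂ - μ₂ with hb
  have h10 : |(0:ℝ)| < 1 := by norm_num
  set A1 := stdPDF a * stdPDF b with hA1d
  set A2 := (stdPDF a * a) * (stdPDF b * b) with hA2d
  set A3 := (stdPDF a * (a^2-1)) * (stdPDF b * (b^2-1)) with hA3d
  have hA1 : Psi a b 0 = A1 := Psi_zero a b
  have hA2 : Psi a b 0 * RR a b 0 = A2 := by rw [Psi_zero, RR_zero, hA2d]; ring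
  have hA3 : Psi a b 0 * ((RR a b 0)^2 + RRd a b 0) = A3 := by
    rw [Psi_zero, RR_zero, RRd_zero, hA3d]; ring
  -- level 0
  have h0O : (fun ρ => Psi a b ρ * ((RR a b ρ)^2 + RRd a b ρ) - A3)
      =O[nhds (0:ℝ)] fun ρ => ρ^1 := by
    have h := (differentiableAt_psi2 a b).isBigO_sub
    have h2 : (fun x : ℝ => x - 0) = fun x => x^1 := by funext x; simp
    rw [h2] at h
    have h3 : (fun ρ => Psi a b ρ * ((RR a b ρ)^2 + RRd a b ρ) - A3)
        = fun x => (fun ρ => Psi a b ρ * ((RR a b ρ)^2 + RRd a b ρ)) x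
          - (fun ρ => Psi a b ρ * ((RR a b ρ)^2 + RRd a b ρ)) 0 := by
      funext x
      simp only
      rw [hA3]
    rw [h3]
    exact h
  -- derivative of psi1
  have hψ1d : ∀ x : ℝ, |x| < 1 → HasDerivAt (fun ρ => Psi a b ρ * RR a b ρ)
      (Psi a b x * ((RR a b x)^2 + RRd a b x)) x := by
    intro x hx
    have := (hasDerivAt_Psi a b hx).mul (hasDerivAt_RR a b hx)
    convert this using 1
    · rfl
    · rfl
    · rfl
    ring
  -- level 1
  have hO2 : (fun ρ => Psi a b ρ * RR a b ρ - A2 - A3*ρ)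
      =O[nhds (0:ℝ)] fun ρ => ρ^2 := by
    refine isBigO_deriv_step (by simp [hA2]) (fun x hx => ?_) h0O
    have hx1 : |x| < 1 := abs_lt.2 ⟨hx.1, hx.2⟩
    have := ((hψ1d x hx1).sub_const A2).sub ((hasDerivAt_id x).const_mul A3)
    convert this using 1
    · rfl
    · rfl
    · rfl
    simp
  -- level 2
  have hO3 : (fun ρ => Psi a b ρ - A1 - A2*ρ - A3/2*ρ^2)
      =O[nhds (0:ℝ)] fun ρ => ρ^3 := by
    refine isBigO_deriv_step (by simp [hA1]) (fun x hx => ?_) hO2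
    have hx1 : |x| < 1 := abs_lt.2 ⟨hx.1, hx.2⟩
    have := (((hasDerivAt_Psi a b hx1).sub_const A1).sub
      ((hasDerivAt_id x).const_mul A2)).sub ((hasDerivAt_pow 2 x).const_mul (A3/2))
    convert this using 1
    · rfl
    · rfl
    · rfl
    push_cast
    ring
  -- level 3
  refine isBigO_deriv_step (n := 3) ?_ (fun x hx => ?_) hO3
  · show (∫ p in {p : ℝ × ℝ | p.1 < c₁ ∧ p.2 < c₂}, bvnPDF μ₁ μ₂ 0 p.1 p.2) -
      (stdCDF a * stdCDF b + stdPDF a * stdPDF b * 0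
        + 1 / 2 * (stdPDF a * a) * (stdPDF b * b) * 0 ^ 2
        + 1 / 6 * (stdPDF a * (a ^ 2 - 1)) * (stdPDF b * (b ^ 2 - 1)) * 0 ^ 3) = 0
    rw [quadInt_eq h10 μ₁ μ₂ c₁ c₂]
    have : (∫ u in Iio a, stdPDF u * stdCDF ((c₂ - μ₂ - 0*u)/Real.sqrt (1-(0:ℝ)^2)))
        = stdCDF a * stdCDF b := F_zero a b
    rw [this]
    ring
  · have hx1 : |x| < 1 := abs_lt.2 ⟨hx.1, hx.2⟩
    have hF := hasDerivAt_F hx1 a b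
    rw [corner_eq a b hx1] at hF
    have hP : HasDerivAt (fun ρ : ℝ => stdCDF a * stdCDF b + A1 * ρ
        + 1/2 * (stdPDF a * a) * (stdPDF b * b) * ρ^2
        + 1/6 * (stdPDF a * (a^2-1)) * (stdPDF b * (b^2-1)) * ρ^3)
        (A1 + A2*x + A3/2*x^2) x := by
      have h1 := (hasDerivAt_id x).const_mul A1
      have h2 := (hasDerivAt_pow 2 x).const_mul (1/2 * (stdPDF a * a) * (stdPDF b * b))
      have h3 := (hasDerivAt_pow 3 x).const_mul
        (1/6 * (stdPDF a * (a^2-1)) * (stdPDF b * (b^2-1)))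
      have hsum := ((h1.const_add (stdCDF a * stdCDF b)).add h2).add h3
      convert hsum using 1
      · rfl
      · rfl
      · rfl
      rw [hA2d, hA3d]
      norm_num
      ring
    have hcomb := hF.sub hP
    have hev : (fun ρ : ℝ =>
        (∫ p in {p : ℝ × ℝ | p.1 < c₁ ∧ p.2 < c₂}, bvnPDF μ₁ μ₂ ρ p.1 p.2) -
          (stdCDF a * stdCDF b + stdPDF a * stdPDF b * ρ
            + 1 / 2 * (stdPDF a * a) * (stdPDF b * b) * ρ ^ 2
            + 1 / 6 * (stdPDF a * (a ^ 2 - 1)) * (stdPDF b * (b ^ 2 - 1)) * ρ ^ 3))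
        =ᶠ[nhds x] (fun r => (∫ u in Iio a, stdPDF u * stdCDF (gg b r u))
          - (stdCDF a * stdCDF b + A1 * r
            + 1/2 * (stdPDF a * a) * (stdPDF b * b) * r^2
            + 1/6 * (stdPDF a * (a^2-1)) * (stdPDF b * (b^2-1)) * r^3)) := by
      filter_upwards [isOpen_Ioo.mem_nhds hx] with r hr
      have hr1 : |r| < 1 := abs_lt.2 ⟨hr.1, hr.2⟩
      rw [quadInt_eq hr1 μ₁ μ₂ c₁ c₂]
      rfl
    have := hcomb.congr_of_eventuallyEq hev
    convert this using 1
    · rfl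
    · rfl
    ring
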